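/- Let G be a connected finite graph with maximum degree 3, and let uv be an edge. Then there is a choice-random-walk strategy under which the expected time to reach v starting from u is at most 9. Consequently, if G has n vertices, the choice-random-walk cover time from any start vertex is at most 18n − 27. -/

import Mathlib

open scoped ENNReal
open Finset

/-- `qv` is a one-step transition distribution of the choice random walk at vertex `v`:
there are pairwise preference probabilities `α i j ∈ [0,1]` (with `α j i = 1 - α i j`) for
the neighbours of `v`, and the probability of stepping to a neighbour `i` is
`2 (∑_{j ∈ Γ(v)} α i j) / deg(v)²` (two uniform neighbours are offered independently with
replacement, and `i` is chosen over `j` with probability `α i j`). -/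
def IsCRWStep {V : Type*} [Fintype V] [DecidableEq V] (G : SimpleGraph V)
    [DecidableRel G.Adj] (v : V) (qv : V → ℝ) : Prop :=
  ∃ α : V → V → ℝ,
    (∀ i ∈ G.neighborFinset v, ∀ j ∈ G.neighborFinset v,
      0 ≤ α i j ∧ α i j ≤ 1 ∧ α j i = 1 - α i j) ∧
    ∀ i, qv i = if i ∈ G.neighborFinset v then
      (2 * ∑ j ∈ G.neighborFinset v, α i j) / ((G.degree v : ℝ)) ^ 2 else 0

/-- The optimal expected time for the choice random walk started at `u` to reach the set
`S`, defined as the least value `h u` over all systems of expected-hitting-time values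
`h : V → ℝ≥0∞` solving the one-step (Bellman) equations for some choice strategy. -/
noncomputable def crwHitTime {V : Type*} [Fintype V] [DecidableEq V] (G : SimpleGraph V)
    [DecidableRel G.Adj] (u : V) (S : Set V) : ℝ≥0∞ :=
  sInf {x : ℝ≥0∞ | ∃ h : V → ℝ≥0∞, x = h u ∧ (∀ v ∈ S, h v = 0) ∧
    ∀ v ∉ S, ∃ qv : V → ℝ, IsCRWStep G v qv ∧
      h v = 1 + ∑ w, ENNReal.ofReal (qv w) * h w}

/-- The optimal expected time for the choice random walk started at `u` to visit every
vertex of `G`, defined via the Bellman equations on states `(current vertex, covered set)`: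
the controller may use any choice strategy depending on the covered set. -/
noncomputable def crwCoverTime {V : Type*} [Fintype V] [DecidableEq V] (G : SimpleGraph V)
    [DecidableRel G.Adj] (u : V) : ℝ≥0∞ :=
  sInf {x : ℝ≥0∞ | ∃ h : V → Finset V → ℝ≥0∞, x = h u {u} ∧
    (∀ v, h v Finset.univ = 0) ∧
    ∀ v (X : Finset V), X ≠ Finset.univ → ∃ qv : V → ℝ, IsCRWStep G v qv ∧
      h v X = 1 + ∑ w, ENNReal.ofReal (qv w) * h w (insert w X)}

section Bellman

variable {V : Type*} [Fintype V]

open Classical in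
/-- Finite-horizon value iterates for a Bellman system with absorbing set `A`. -/
noncomputable def crwIter {σ : Type*} (A : σ → Prop) (c : σ → V → ℝ≥0∞) (T : σ → V → σ) :
    ℕ → σ → ℝ≥0∞
  | 0 => fun _ => 0
  | n + 1 => fun s => if A s then 0 else 1 + ∑ w, c s w * crwIter A c T n (T s w)

lemma crwIter_mono_succ {σ : Type*} (A : σ → Prop) (c : σ → V → ℝ≥0∞) (T : σ → V → σ) :
    ∀ n s, crwIter A c T n s ≤ crwIter A c T (n + 1) s := by
  intro n
  induction n with
  | zero => intro s; exact zero_le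
  | succ n ih =>
    intro s
    simp only [crwIter]
    split
    · exact le_rfl
    · exact add_le_add_right (Finset.sum_le_sum fun w _ =>
        mul_le_mul_right (ih (T s w)) _) 1

lemma crwIter_mono {σ : Type*} (A : σ → Prop) (c : σ → V → ℝ≥0∞) (T : σ → V → σ) (s : σ) :
    Monotone fun n => crwIter A c T n s :=
  monotone_nat_of_le_succ fun n => crwIter_mono_succ A c T n s

lemma bellman_sup {σ : Type*} (A : σ → Prop) (c : σ → V → ℝ≥0∞) (T : σ → V → σ)
    (Φ : σ → ℝ≥0∞) (hsup : ∀ s, ¬ A s → 1 + ∑ w, c s w * Φ (T s w) ≤ Φ s) :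
    ∃ h : σ → ℝ≥0∞, (∀ s, A s → h s = 0) ∧
      (∀ s, ¬ A s → h s = 1 + ∑ w, c s w * h (T s w)) ∧ (∀ s, h s ≤ Φ s) := by
  classical
  refine ⟨fun s => ⨆ n, crwIter A c T n s, ?_, ?_, ?_⟩
  · intro s hs
    show (⨆ n, crwIter A c T n s) = 0
    refine le_antisymm (iSup_le fun n => ?_) zero_le
    cases n with
    | zero => exact le_rfl
    | succ n => simp [crwIter, hs]
  · intro s hs
    show (⨆ n, crwIter A c T n s) = 1 + ∑ w, c s w * ⨆ n, crwIter A c T n (T s w)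
    have hshift : (⨆ n, crwIter A c T n s) = ⨆ n, crwIter A c T (n + 1) s := by
      refine le_antisymm (iSup_le fun n => ?_) (iSup_le fun n => ?_)
      · exact le_trans (crwIter_mono_succ A c T n s) (le_iSup (fun n => crwIter A c T (n+1) s) n)
      · exact le_iSup (fun n => crwIter A c T n s) (n + 1)
    rw [hshift]
    
    have hstep : ∀ n, crwIter A c T (n + 1) s = 1 + ∑ w, c s w * crwIter A c T n (T s w) := by
      intro n; simp [crwIter, hs]
    simp only [hstep]
    rw [← ENNReal.add_iSup]
    congr 1
    rw [← ENNReal.finsetSum_iSup_of_monotone]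
    · exact Finset.sum_congr rfl fun w _ => (ENNReal.mul_iSup _ _).symm
    · intro w a b hab
      exact mul_le_mul_right (crwIter_mono A c T (T s w) hab) _
  · intro s
    refine iSup_le fun n => ?_
    induction n generalizing s with
    | zero => exact zero_le
    | succ n ih =>
      simp only [crwIter]
      split
      · exact zero_le
      · next hA =>
        exact le_trans (add_le_add_right (Finset.sum_le_sum fun w _ =>
          mul_le_mul_right (ih (T s w)) _) 1) (hsup s hA)

/-- Conversion of a real one-step inequality to the `ℝ≥0∞` one. -/
lemma ofReal_step {C : ℝ} (q Ψ : V → ℝ) (hq : ∀ w, 0 ≤ q w) (hΨ : ∀ w, 0 ≤ Ψ w)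
    (h : 1 + ∑ w, q w * Ψ w ≤ C) :
    (1 : ℝ≥0∞) + ∑ w, ENNReal.ofReal (q w) * ENNReal.ofReal (Ψ w) ≤ ENNReal.ofReal C := by
  have h1 : ∀ w : V, ENNReal.ofReal (q w) * ENNReal.ofReal (Ψ w)
      = ENNReal.ofReal (q w * Ψ w) := fun w => (ENNReal.ofReal_mul (hq w)).symm
  calc (1 : ℝ≥0∞) + ∑ w, ENNReal.ofReal (q w) * ENNReal.ofReal (Ψ w)
      = 1 + ∑ w, ENNReal.ofReal (q w * Ψ w) := by
        rw [Finset.sum_congr rfl fun w _ => h1 w]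
    _ = ENNReal.ofReal (1 + ∑ w, q w * Ψ w) := by
        rw [ENNReal.ofReal_add (by norm_num)
          (Finset.sum_nonneg fun w _ => mul_nonneg (hq w) (hΨ w)),
          ENNReal.ofReal_sum_of_nonneg fun w _ => mul_nonneg (hq w) (hΨ w),
          ENNReal.ofReal_one]
    _ ≤ ENNReal.ofReal C := ENNReal.ofReal_le_ofReal h

end Bellman

open scoped ENNReal
open Finset

section Steps

variable {V : Type*} [Fintype V] [DecidableEq V] (G : SimpleGraph V) [DecidableRel G.Adj]

/-- The uniform choice-random-walk step (no preference). -/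
noncomputable def unifStep (v : V) : V → ℝ := fun i =>
  if i ∈ G.neighborFinset v then ((G.degree v : ℝ))⁻¹ else 0

/-- The step preferring the neighbour `p` with full strength. -/
noncomputable def prefStep (v p : V) : V → ℝ := fun i =>
  if i ∈ G.neighborFinset v then
    (if i = p then (2 * (G.degree v : ℝ) - 1) / (G.degree v : ℝ) ^ 2
     else ((G.degree v : ℝ) - 1) / (G.degree v : ℝ) ^ 2)
  else 0

lemma unifStep_nonneg (v w : V) : 0 ≤ unifStep G v w := by
  unfold unifStep
  split
  · positivity
  · exact le_rfl

lemma unifStep_isCRWStep (v : V) : IsCRWStep G v (unifStep G v) := by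
  refine ⟨fun _ _ => 1/2, fun i _ j _ => by norm_num, fun i => ?_⟩
  unfold unifStep
  by_cases hi : i ∈ G.neighborFinset v
  · rw [if_pos hi, if_pos hi]
    have hcard : (G.neighborFinset v).card = G.degree v := G.card_neighborFinset_eq_degree v
    have hδ : 0 < G.degree v := by
      rw [← hcard]; exact Finset.card_pos.mpr ⟨i, hi⟩
    have hδ' : (0:ℝ) < (G.degree v : ℝ) := by exact_mod_cast hδ
    rw [Finset.sum_const, hcard, nsmul_eq_mul]
    field_simp
  · rw [if_neg hi, if_neg hi]

lemma prefStep_nonneg {v p : V} (hp : p ∈ G.neighborFinset v) (w : V) :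
    0 ≤ prefStep G v p w := by
  have hδ : 0 < G.degree v := by
    rw [← G.card_neighborFinset_eq_degree v]; exact Finset.card_pos.mpr ⟨p, hp⟩
  have hδ' : (1:ℝ) ≤ (G.degree v : ℝ) := by exact_mod_cast hδ
  unfold prefStep
  split
  · split
    · apply div_nonneg (by linarith) (by positivity)
    · apply div_nonneg (by linarith) (by positivity)
  · exact le_rfl

lemma prefStep_isCRWStep {v p : V} (hp : p ∈ G.neighborFinset v) :
    IsCRWStep G v (prefStep G v p) := by
  have hcard : (G.neighborFinset v).card = G.degree v := G.card_neighborFinset_eq_degree v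
  have hδ : 0 < G.degree v := by rw [← hcard]; exact Finset.card_pos.mpr ⟨p, hp⟩
  have hδ' : (1:ℝ) ≤ (G.degree v : ℝ) := by exact_mod_cast hδ
  have hδ0 : (G.degree v : ℝ) ≠ 0 := by linarith
  refine ⟨fun i j => if i = j then 1/2 else if i = p then 1 else if j = p then 0 else 1/2,
    ?_, ?_⟩
  · intro i _ j _
    refine ⟨?_, ?_, ?_⟩ <;> dsimp only <;> split_ifs <;> subst_vars <;>
      first | exact absurd rfl (by assumption) | norm_num
  · intro i
    unfold prefStep
    by_cases hi : i ∈ G.neighborFinset v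
    · rw [if_pos hi, if_pos hi]
      by_cases hip : i = p
      · subst hip
        rw [if_pos rfl]
        have hsum : ∑ j ∈ G.neighborFinset v,
            (if i = j then (1:ℝ)/2 else if i = i then 1 else if j = i then 0 else 1/2)
            = (G.degree v : ℝ) - 1/2 := by
          rw [← Finset.add_sum_erase _ _ hi]
          rw [if_pos rfl]
          have : ∀ j ∈ (G.neighborFinset v).erase i,
              (if i = j then (1:ℝ)/2 else if i = i then 1 else if j = i then 0 else 1/2) = 1 := by
            intro j hj
            rw [if_neg (Ne.symm (Finset.mem_erase.mp hj).1), if_pos rfl]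
          rw [Finset.sum_congr rfl this, Finset.sum_const, Finset.card_erase_of_mem hi,
            hcard, nsmul_eq_mul, Nat.cast_sub hδ]
          push_cast
          ring
        rw [hsum]
        congr 1
        ring
      · rw [if_neg hip]
        have hie : i ∈ (G.neighborFinset v).erase p := Finset.mem_erase.mpr ⟨hip, hi⟩
        have hδ2 : 2 ≤ G.degree v := by
          have h1 : 1 ≤ ((G.neighborFinset v).erase p).card := Finset.card_pos.mpr ⟨i, hie⟩
          have := Finset.card_erase_of_mem hp
          omega
        have hsum : ∑ j ∈ G.neighborFinset v,
            (if i = j then (1:ℝ)/2 else if i = p then 1 else if j = p then 0 else 1/2)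
            = ((G.degree v : ℝ) - 1) / 2 := by
          simp only [if_neg hip]
          rw [← Finset.add_sum_erase _ _ hp]
          rw [if_neg hip, if_pos rfl]
          rw [← Finset.add_sum_erase _ _ hie]
          rw [if_pos rfl]
          have : ∀ j ∈ ((G.neighborFinset v).erase p).erase i,
              (if i = j then (1:ℝ)/2 else if j = p then 0 else 1/2) = 1/2 := by
            intro j hj
            have hj1 := Finset.mem_erase.mp hj
            have hj2 := Finset.mem_erase.mp hj1.2
            rw [if_neg (Ne.symm hj1.1), if_neg hj2.1]
          rw [Finset.sum_congr rfl this, Finset.sum_const, Finset.card_erase_of_mem hie,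
            Finset.card_erase_of_mem hp, hcard, nsmul_eq_mul]
          have hc : ((G.degree v - 1 - 1 : ℕ) : ℝ) = (G.degree v : ℝ) - 2 := by
            rw [Nat.cast_sub (by omega), Nat.cast_sub hδ]
            push_cast
            ring
          rw [hc]
          ring
        rw [hsum]
        congr 1
        ring
    · rw [if_neg hi, if_neg hi]

end Steps

section Drift

variable {V : Type*} [Fintype V] [DecidableEq V] (G : SimpleGraph V) [DecidableRel G.Adj]

omit [Fintype V] [DecidableEq V] [DecidableRel G.Adj] in
lemma exists_closer (hconn : G.Connected) {v t : V} (hvt : v ≠ t) :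
    ∃ p, G.Adj v p ∧ G.dist p t + 1 = G.dist v t := by
  obtain ⟨W, hW⟩ := hconn.exists_walk_length_eq_dist v t
  cases W with
  | nil => exact absurd rfl hvt
  | @cons _ b _ h W' =>
    refine ⟨b, h, ?_⟩
    have h1 : G.dist b t ≤ W'.length := SimpleGraph.dist_le W'
    have h2 : G.dist v t ≤ G.dist v b + G.dist b t := hconn.dist_triangle
    have h3 : G.dist v b ≤ 1 := SimpleGraph.dist_le (SimpleGraph.Walk.cons h SimpleGraph.Walk.nil)
    have h4 : (SimpleGraph.Walk.cons h W').length = W'.length + 1 := SimpleGraph.Walk.length_cons h W'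
    rw [h4] at hW
    omega

omit [Fintype V] [DecidableEq V] [DecidableRel G.Adj] in
lemma dist_le_succ_of_adj (hconn : G.Connected) {v x : V} (h : G.Adj v x) (t : V) :
    G.dist x t ≤ G.dist v t + 1 := by
  have h2 : G.dist x t ≤ G.dist x v + G.dist v t := hconn.dist_triangle
  have h3 : G.dist x v ≤ 1 :=
    SimpleGraph.dist_le (SimpleGraph.Walk.cons h.symm SimpleGraph.Walk.nil)
  omega

/-- The key one-step drift estimate for the full-strength preferred step towards `t`. -/
lemma crw_drift (hconn : G.Connected) (hdeg : ∀ x, G.degree x ≤ 3) {v t : V} (hvt : v ≠ t)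
    (Ψ : V → ℝ) (B : ℝ)
    (h1 : ∀ x, G.Adj v x → Ψ x ≤ 9 * (G.dist x t : ℝ) + B) :
    ∃ q : V → ℝ, IsCRWStep G v q ∧ (∀ w, 0 ≤ q w) ∧
      1 + ∑ w, q w * Ψ w ≤ 9 * (G.dist v t : ℝ) + B := by
  obtain ⟨p, hadj, hdp⟩ := exists_closer G hconn hvt
  have hp : p ∈ G.neighborFinset v := (G.mem_neighborFinset v p).mpr hadj
  have hcard : (G.neighborFinset v).card = G.degree v := G.card_neighborFinset_eq_degree v
  have hδ1 : 1 ≤ G.degree v := by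
    rw [← hcard]; exact Finset.card_pos.mpr ⟨p, hp⟩
  have hδ3 : G.degree v ≤ 3 := hdeg v
  refine ⟨prefStep G v p, prefStep_isCRWStep G hp, prefStep_nonneg G hp, ?_⟩
  set δ : ℝ := (G.degree v : ℝ) with hδdef
  have hD1 : 1 ≤ G.dist v t := by omega
  set D : ℝ := (G.dist v t : ℝ) with hDdef
  have hD1' : (1:ℝ) ≤ D := by rw [hDdef]; exact_mod_cast hD1
  have hδ1' : (1:ℝ) ≤ δ := by rw [hδdef]; exact_mod_cast hδ1
  -- restrict the sum to the neighbours
  have hzero : ∀ x ∈ Finset.univ, x ∉ G.neighborFinset v → prefStep G v p x * Ψ x = 0 := by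
    intro x _ hx
    unfold prefStep
    rw [if_neg hx, zero_mul]
  rw [← Finset.sum_subset (Finset.subset_univ (G.neighborFinset v)) hzero]
  rw [← Finset.add_sum_erase _ _ hp]
  have hqp : prefStep G v p p = (2 * δ - 1) / δ ^ 2 := by
    unfold prefStep; rw [if_pos hp, if_pos rfl]
  have hΨp : Ψ p ≤ 9 * (D - 1) + B := by
    have := h1 p hadj
    have hc : (G.dist p t : ℝ) = D - 1 := by
      rw [hDdef, ← hdp]; push_cast; ring
    rw [hc] at this; exact this
  have hδpos : (0:ℝ) < δ := by
    rw [hδdef]; exact_mod_cast hδ1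
  have hqpnn : 0 ≤ (2 * δ - 1) / δ ^ 2 := by
    apply div_nonneg (by linarith) (by positivity)
  have hterm : ∀ x ∈ (G.neighborFinset v).erase p,
      prefStep G v p x * Ψ x ≤ (δ - 1) / δ ^ 2 * (9 * (D + 1) + B) := by
    intro x hx
    obtain ⟨hxp, hxΓ⟩ := Finset.mem_erase.mp hx
    have hadjx : G.Adj v x := (G.mem_neighborFinset v x).mp hxΓ
    have hq : prefStep G v p x = (δ - 1) / δ ^ 2 := by
      unfold prefStep; rw [if_pos hxΓ, if_neg hxp]
    have hΨx : Ψ x ≤ 9 * (D + 1) + B := by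
      have := h1 x hadjx
      have hc : (G.dist x t : ℝ) ≤ D + 1 := by
        have := dist_le_succ_of_adj G hconn hadjx t
        rw [hDdef]; exact_mod_cast this
      linarith
    have hqnn : 0 ≤ (δ - 1) / δ ^ 2 := div_nonneg (by linarith) (by positivity)
    rw [hq]
    exact mul_le_mul_of_nonneg_left hΨx hqnn
  have hsum2 : ∑ x ∈ (G.neighborFinset v).erase p, prefStep G v p x * Ψ x
      ≤ (δ - 1) * ((δ - 1) / δ ^ 2 * (9 * (D + 1) + B)) := by
    calc ∑ x ∈ (G.neighborFinset v).erase p, prefStep G v p x * Ψ x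
        ≤ ((G.neighborFinset v).erase p).card • ((δ - 1) / δ ^ 2 * (9 * (D + 1) + B)) :=
          Finset.sum_le_card_nsmul _ _ _ hterm
      _ = (δ - 1) * ((δ - 1) / δ ^ 2 * (9 * (D + 1) + B)) := by
          rw [Finset.card_erase_of_mem hp, hcard, nsmul_eq_mul, Nat.cast_sub hδ1]
          push_cast
          ring
  have hmain : 1 + ((2 * δ - 1) / δ ^ 2 * (9 * (D - 1) + B)
      + (δ - 1) * ((δ - 1) / δ ^ 2 * (9 * (D + 1) + B))) ≤ 9 * D + B := by
    interval_cases h : G.degree v <;>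
      · simp only [hδdef, h] at *
        push_cast
        push_cast at hδpos
        nlinarith [hD1']
  calc 1 + (prefStep G v p p * Ψ p + ∑ x ∈ (G.neighborFinset v).erase p, prefStep G v p x * Ψ x)
      ≤ 1 + ((2 * δ - 1) / δ ^ 2 * (9 * (D - 1) + B)
        + (δ - 1) * ((δ - 1) / δ ^ 2 * (9 * (D + 1) + B))) := by
        have := mul_le_mul_of_nonneg_left hΨp hqpnn
        rw [hqp]
        linarith [hsum2]
    _ ≤ 9 * D + B := hmain

/-- One-step bound for the uniform step. -/
lemma crw_unif (v : V) (Ψ : V → ℝ) (C : ℝ) (hC : 0 ≤ C)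
    (h1 : ∀ x, G.Adj v x → Ψ x ≤ C) :
    ∃ q : V → ℝ, IsCRWStep G v q ∧ (∀ w, 0 ≤ q w) ∧ 1 + ∑ w, q w * Ψ w ≤ 1 + C := by
  refine ⟨unifStep G v, unifStep_isCRWStep G v, unifStep_nonneg G v, ?_⟩
  have hzero : ∀ x ∈ Finset.univ, x ∉ G.neighborFinset v → unifStep G v x * Ψ x = 0 := by
    intro x _ hx
    unfold unifStep
    rw [if_neg hx, zero_mul]
  rw [← Finset.sum_subset (Finset.subset_univ (G.neighborFinset v)) hzero]
  rcases Nat.eq_zero_or_pos (G.degree v) with hδ | hδ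
  · have : G.neighborFinset v = ∅ := Finset.card_eq_zero.mp (by
      rw [G.card_neighborFinset_eq_degree v, hδ])
    rw [this]
    simp
    linarith
  · have hδ' : (0:ℝ) < (G.degree v : ℝ) := by exact_mod_cast hδ
    have hterm : ∀ x ∈ G.neighborFinset v,
        unifStep G v x * Ψ x ≤ ((G.degree v : ℝ))⁻¹ * C := by
      intro x hx
      have hq : unifStep G v x = ((G.degree v : ℝ))⁻¹ := by
        unfold unifStep; rw [if_pos hx]
      rw [hq]
      exact mul_le_mul_of_nonneg_left (h1 x ((G.mem_neighborFinset v x).mp hx))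
        (by positivity)
    calc 1 + ∑ x ∈ G.neighborFinset v, unifStep G v x * Ψ x
        ≤ 1 + (G.neighborFinset v).card • (((G.degree v : ℝ))⁻¹ * C) := by
          linarith [Finset.sum_le_card_nsmul (G.neighborFinset v)
            (fun x => unifStep G v x * Ψ x) (((G.degree v : ℝ))⁻¹ * C) hterm]
      _ = 1 + C := by
          rw [G.card_neighborFinset_eq_degree v, nsmul_eq_mul]
          field_simp
  
end Drift

section Instantiate

variable {V : Type*} [Fintype V] [DecidableEq V] (G : SimpleGraph V) [DecidableRel G.Adj]

lemma crwHitTime_le (S : Set V) (Φ : V → ℝ) (hΦ : ∀ v, 0 ≤ Φ v)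
    (H : ∀ v, v ∉ S → ∃ q : V → ℝ, IsCRWStep G v q ∧ (∀ w, 0 ≤ q w) ∧
      1 + ∑ w, q w * Φ w ≤ Φ v) (u : V) :
    crwHitTime G u S ≤ ENNReal.ofReal (Φ u) := by
  classical
  choose q hq1 hq2 hq3 using H
  set Q : V → V → ℝ := fun v => if h : v ∈ S then (fun _ => 0) else q v h with hQ
  set c : V → V → ℝ≥0∞ := fun v w => ENNReal.ofReal (Q v w) with hc
  have hsup : ∀ v : V, ¬ v ∈ S → 1 + ∑ w, c v w * ENNReal.ofReal (Φ w)
      ≤ ENNReal.ofReal (Φ v) := by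
    intro v hv
    have hQv : Q v = q v hv := by rw [hQ]; simp only [dif_neg hv]
    simp only [hc, hQv]
    exact ofReal_step (q v hv) Φ (hq2 v hv) hΦ (hq3 v hv)
  obtain ⟨h, h0, heq, hle⟩ := bellman_sup (fun v : V => v ∈ S) c (fun _ w => w)
    (fun v => ENNReal.ofReal (Φ v)) hsup
  refine le_trans (sInf_le ?_) (hle u)
  refine ⟨h, rfl, fun v hv => h0 v hv, fun v hv => ⟨Q v, ?_, heq v hv⟩⟩
  rw [hQ]
  simp only [dif_neg hv]
  exact hq1 v hv

lemma crwCoverTime_le (Φ : V → Finset V → ℝ) (hΦ : ∀ v X, 0 ≤ Φ v X)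
    (H : ∀ v (X : Finset V), X ≠ Finset.univ → ∃ q : V → ℝ, IsCRWStep G v q ∧
      (∀ w, 0 ≤ q w) ∧ 1 + ∑ w, q w * Φ w (insert w X) ≤ Φ v X) (u : V) :
    crwCoverTime G u ≤ ENNReal.ofReal (Φ u {u}) := by
  classical
  choose q hq1 hq2 hq3 using H
  set Q : V → Finset V → V → ℝ := fun v X =>
    if h : X = Finset.univ then (fun _ => 0) else q v X h with hQ
  set c : V × Finset V → V → ℝ≥0∞ := fun s w => ENNReal.ofReal (Q s.1 s.2 w) with hc
  have hsup : ∀ s : V × Finset V, ¬ s.2 = Finset.univ →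
      1 + ∑ w, c s w * ENNReal.ofReal (Φ (w, insert w s.2).1 (w, insert w s.2).2)
      ≤ ENNReal.ofReal (Φ s.1 s.2) := by
    rintro ⟨v, X⟩ hv
    have hQv : Q v X = q v X hv := by rw [hQ]; simp only [dif_neg hv]
    simp only [hc, hQv]
    exact ofReal_step (q v X hv) (fun w => Φ w (insert w X)) (hq2 v X hv)
      (fun w => hΦ w (insert w X)) (hq3 v X hv)
  obtain ⟨h, h0, heq, hle⟩ := bellman_sup (fun s : V × Finset V => s.2 = Finset.univ) c
    (fun s w => (w, insert w s.2)) (fun s => ENNReal.ofReal (Φ s.1 s.2)) hsup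
  refine le_trans (sInf_le ?_) (hle (u, {u}))
  refine ⟨fun v X => h (v, X), rfl, fun v => h0 (v, Finset.univ) rfl,
    fun v X hX => ⟨Q v X, ?_, heq (v, X) hX⟩⟩
  rw [hQ]
  simp only [dif_neg hX]
  exact hq1 v X hX

/-- Part 1: hitting an adjacent vertex in expected time at most 9. -/
lemma hit_part (hconn : G.Connected) (hdeg : ∀ x, G.degree x ≤ 3) (u v : V)
    (huv : G.Adj u v) : crwHitTime G u {v} ≤ 9 := by
  have hmain : crwHitTime G u {v} ≤ ENNReal.ofReal (9 * (G.dist u v : ℝ)) := by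
    apply crwHitTime_le G {v} (fun x => 9 * (G.dist x v : ℝ))
      (fun x => by positivity)
    intro x hx
    have hxv : x ≠ v := fun h => hx (by simp [h])
    obtain ⟨q, hq1, hq2, hq3⟩ := crw_drift G hconn hdeg hxv
      (fun y => 9 * (G.dist y v : ℝ)) 0 (fun y _ => by simp)
    exact ⟨q, hq1, hq2, by simpa using hq3⟩
  have hd : G.dist u v = 1 := SimpleGraph.dist_eq_one_iff_adj.mpr huv
  rw [hd] at hmain
  calc crwHitTime G u {v} ≤ ENNReal.ofReal (9 * (1:ℕ)) := hmain
    _ = 9 := by norm_num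

end Instantiate

universe u

/-- A connected graph on `n ≥ 2` vertices has a spanning walk from any vertex with at most
`2n - 3` edges. -/
lemma exists_spanning_walk : ∀ (n : ℕ) {V : Type u} [Fintype V] [DecidableEq V]
    (G : SimpleGraph V), G.Connected → Fintype.card V = n → 2 ≤ n → ∀ u : V,
    ∃ (m : ℕ) (w : ℕ → V), w 0 = u ∧ m + 3 ≤ 2 * n ∧
      (∀ j < m, G.Adj (w j) (w (j + 1))) ∧ ∀ x, ∃ j ≤ m, w j = x := by
  intro n
  induction n using Nat.strong_induction_on with
  | _ n ih =>
  intro V _ _ G hconn hcard hn u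
  by_cases hbase : n = 2
  · -- base case: two vertices
    subst hbase
    obtain ⟨x, hxu⟩ := Fintype.exists_ne_of_one_lt_card (by omega) u
    have huniq : ∀ y z : V, y ≠ u → z ≠ u → y = z := by
      intro y z hy hz
      by_contra hyz
      have hcard3 : ({u, y, z} : Finset V).card = 3 := by
        rw [Finset.card_insert_of_notMem (by simp [Ne.symm hy, Ne.symm hz]),
          Finset.card_insert_of_notMem (by simp [hyz]), Finset.card_singleton]
      have := Finset.card_le_univ ({u, y, z} : Finset V)
      rw [hcard3, hcard] at this
      omega
    have hadj : G.Adj u x := by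
      obtain ⟨W⟩ := hconn.preconnected u x
      cases W with
      | nil => exact absurd rfl hxu
      | @cons _ b _ h W' =>
        have hbu : b ≠ u := (G.ne_of_adj h).symm
        rwa [huniq b x hbu hxu] at h
    refine ⟨1, fun j => if j = 0 then u else x, by simp, by omega, ?_, ?_⟩
    · intro j hj
      have : j = 0 := by omega
      subst this
      simpa using hadj
    · intro y
      by_cases hy : y = u
      · exact ⟨0, by omega, by simp [hy]⟩
      · exact ⟨1, by omega, by simp [huniq x y hxu hy]⟩
  · -- inductive step: n ≥ 3, remove a vertex of maximal distance from u
    have hn3 : 3 ≤ n := by omega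
    obtain ⟨v, -, hv⟩ := Finset.exists_max_image Finset.univ (G.dist u) ⟨u, Finset.mem_univ u⟩
    have hvu : v ≠ u := by
      obtain ⟨y, hy⟩ := Fintype.exists_ne_of_one_lt_card (by omega) u
      have h1 : 0 < G.dist u y := hconn.pos_dist_of_ne (Ne.symm hy)
      have h2 := hv y (Finset.mem_univ y)
      intro hvu'
      rw [hvu', SimpleGraph.dist_self] at h2
      omega
    have hunv : u ≠ v := Ne.symm hvu
    -- the induced graph on the complement of v
    set G' : SimpleGraph {x : V // x ≠ v} := G.comap (fun x => (x : V)) with hG'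
    have hkey : ∀ x : V, x ≠ v → ∃ W : G.Walk u x, v ∉ W.support := by
      intro x hx
      obtain ⟨W, hWlen⟩ := hconn.exists_walk_length_eq_dist u x
      refine ⟨W, fun hmem => ?_⟩
      have hsplit := W.take_spec hmem
      have hlen : (W.takeUntil v hmem).length + (W.dropUntil v hmem).length = W.length := by
        rw [← SimpleGraph.Walk.length_append, hsplit]
      have h1 : G.dist u v ≤ (W.takeUntil v hmem).length := SimpleGraph.dist_le _
      have h2 : G.dist v x ≤ (W.dropUntil v hmem).length := SimpleGraph.dist_le _
      have h3 : 0 < G.dist v x := hconn.pos_dist_of_ne (Ne.symm hx)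
      have h4 : G.dist u x ≤ G.dist u v := hv x (Finset.mem_univ x)
      omega
    have hlift : ∀ {a b : V} (W : G.Walk a b), v ∉ W.support →
        ∀ (ha : a ≠ v) (hb : b ≠ v), G'.Reachable ⟨a, ha⟩ ⟨b, hb⟩ := by
      intro a b W
      induction W with
      | nil => exact fun _ ha hb => SimpleGraph.Reachable.refl _
      | @cons a c b h W' ihW =>
        intro hsup ha hb
        have hc : c ≠ v := by
          intro hcv
          apply hsup
          rw [SimpleGraph.Walk.support_cons]
          exact List.mem_cons_of_mem _ (hcv ▸ W'.start_mem_support)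
        have hsup' : v ∉ W'.support := by
          intro hm
          apply hsup
          rw [SimpleGraph.Walk.support_cons]
          exact List.mem_cons_of_mem _ hm
        have hadj' : G'.Adj ⟨a, ha⟩ ⟨c, hc⟩ := by
          rw [hG']
          simpa using h
        exact hadj'.reachable.trans (ihW hsup' hc hb)
    have hG'conn : G'.Connected := by
      rw [SimpleGraph.connected_iff]
      refine ⟨fun x y => ?_, ⟨⟨u, hunv⟩⟩⟩
      obtain ⟨Wx, hWx⟩ := hkey x.1 x.2
      obtain ⟨Wy, hWy⟩ := hkey y.1 y.2
      have rx := hlift Wx hWx hunv x.2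
      have ry := hlift Wy hWy hunv y.2
      exact rx.symm.trans ry
    have hcards : Fintype.card {x : V // x ≠ v} = n - 1 := by
      have h1 : Fintype.card {x : V // x = v} = 1 := Fintype.card_subtype_eq v
      have h2 := Fintype.card_subtype_compl (fun x : V => x = v)
      rw [h1, hcard] at h2
      exact h2
    obtain ⟨m', w', hw0, hm', hadj', hcov'⟩ := ih (n - 1) (by omega) G' hG'conn hcards
      (by omega) ⟨u, hunv⟩
    obtain ⟨p, hpadj, -⟩ := exists_closer G hconn hvu
    have hpv : p ≠ v := (G.ne_of_adj hpadj).symm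
    obtain ⟨J, hJm, hJ⟩ := hcov' ⟨p, hpv⟩
    set w'' : ℕ → V := fun j => (w' j).1 with hw''
    have hJp : w'' J = p := by rw [hw'']; exact congrArg Subtype.val hJ
    refine ⟨m' + 2, fun j => if j ≤ J then w'' j else if j = J + 1 then v else w'' (j - 2),
      ?_, by omega, ?_, ?_⟩
    · simp only [if_pos (Nat.zero_le J)]
      rw [hw'']
      exact congrArg Subtype.val hw0
    · intro j hj
      dsimp only
      by_cases h1 : j + 1 ≤ J
      · rw [if_pos (by omega : j ≤ J), if_pos h1]
        exact hadj' j (by omega)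
      · by_cases h2 : j = J
        · subst h2
          rw [if_pos le_rfl, if_neg (by omega), if_pos rfl, hJp]
          exact hpadj.symm
        · by_cases h3 : j = J + 1
          · subst h3
            rw [if_neg (by omega), if_pos rfl, if_neg (by omega), if_neg (by omega)]
            have : J + 1 + 1 - 2 = J := by omega
            rw [this, hJp]
            exact hpadj
          · have hj2 : J + 2 ≤ j := by omega
            rw [if_neg (by omega), if_neg (by omega), if_neg (by omega), if_neg (by omega)]
            have he : j + 1 - 2 = (j - 2) + 1 := by omega
            rw [he]
            exact hadj' (j - 2) (by omega)
    · intro x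
      by_cases hxv : x = v
      · refine ⟨J + 1, by omega, ?_⟩
        dsimp only
        rw [if_neg (by omega), if_pos rfl, hxv]
      · obtain ⟨j, hj, hjx⟩ := hcov' ⟨x, hxv⟩
        have hjx' : w'' j = x := congrArg Subtype.val hjx
        by_cases hjJ : j ≤ J
        · exact ⟨j, by omega, by dsimp only; rw [if_pos hjJ]; exact hjx'⟩
        · refine ⟨j + 2, by omega, ?_⟩
          dsimp only
          rw [if_neg (by omega), if_neg (by omega)]
          have : j + 2 - 2 = j := by omega
          rw [this]
          exact hjx'

lemma walk_dist {V : Type*} (G : SimpleGraph V) (hconn : G.Connected) (w : ℕ → V) (m : ℕ)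
    (hadj : ∀ j < m, G.Adj (w j) (w (j + 1))) :
    ∀ a b, a ≤ b → b ≤ m → G.dist (w a) (w b) ≤ b - a := by
  intro a b hab
  induction b, hab using Nat.le_induction with
  | base => intro _; simp
  | succ b hab ihb =>
    intro hbm
    have h1 : G.dist (w a) (w (b + 1)) ≤ G.dist (w a) (w b) + G.dist (w b) (w (b + 1)) :=
      hconn.dist_triangle
    have h2 : G.dist (w b) (w (b + 1)) ≤ 1 := by
      have h' := SimpleGraph.dist_le (SimpleGraph.Walk.cons (hadj b (by omega))
        SimpleGraph.Walk.nil)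
      rw [SimpleGraph.Walk.length_cons, SimpleGraph.Walk.length_nil] at h'
      exact h'
    have h3 := ihb (by omega)
    omega

/-- Let `G` be a connected finite graph with maximum degree `3`.  Then for every edge `uv`
there is a choice-random-walk strategy reaching `v` from `u` in expected time at most `9`,
and consequently, if `G` has `n` vertices, the choice-random-walk cover time from any start
vertex is at most `18n - 27`. -/
theorem subcubic_crw_hit_and_cover {V : Type*} [Fintype V] [DecidableEq V]
    (G : SimpleGraph V) [DecidableRel G.Adj] (hconn : G.Connected)
    (hdeg : ∀ v, G.degree v ≤ 3) :
    (∀ u v : V, G.Adj u v → crwHitTime G u {v} ≤ 9) ∧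
    (∀ u : V, crwCoverTime G u ≤ ENNReal.ofReal (18 * (Fintype.card V : ℝ) - 27)) := by
  classical
  constructor
  · exact fun u v huv => hit_part G hconn hdeg u v huv
  · intro u
    by_cases hcard1 : Fintype.card V = 1
    · -- single-vertex graph: the cover time is 0
      have H1 : ∀ v (X : Finset V), X ≠ Finset.univ → ∃ q : V → ℝ, IsCRWStep G v q ∧
          (∀ y, 0 ≤ q y) ∧ 1 + ∑ y, q y *
            (if insert y X = Finset.univ then (0:ℝ) else 1) ≤
            (if X = Finset.univ then (0:ℝ) else 1) := by
        intro v X hX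
        refine ⟨unifStep G v, unifStep_isCRWStep G v, unifStep_nonneg G v, ?_⟩
        have hdeg0 : G.neighborFinset v = ∅ := by
          rcases Finset.eq_empty_or_nonempty (G.neighborFinset v) with h | ⟨x, hx⟩
          · exact h
          · exfalso
            have hadj : G.Adj v x := (G.mem_neighborFinset v x).mp hx
            have := Fintype.card_le_one_iff.mp (le_of_eq hcard1) x v
            exact G.ne_of_adj hadj this.symm
        have hz : ∀ y : V, unifStep G v y = 0 := by
          intro y
          unfold unifStep
          rw [hdeg0]
          simp
        rw [if_neg hX]
        have : ∑ y, unifStep G v y * (if insert y X = Finset.univ then (0:ℝ) else 1) = 0 := by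
          apply Finset.sum_eq_zero
          intro y _
          rw [hz y, zero_mul]
        rw [this]
        norm_num
      have hbound := crwCoverTime_le G
        (fun (_ : V) (X : Finset V) => if X = Finset.univ then 0 else 1)
        (fun v X => by split <;> norm_num) H1 u
      have huniv : ({u} : Finset V) = Finset.univ := by
        apply Finset.eq_univ_of_card
        rw [Finset.card_singleton, hcard1]
      simp only [if_pos huniv] at hbound
      calc crwCoverTime G u ≤ ENNReal.ofReal 0 := hbound
        _ ≤ _ := by simp
    · -- at least two vertices
      have hn2 : 2 ≤ Fintype.card V := by
        have : 0 < Fintype.card V := @Fintype.card_pos V _ hconn.nonempty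
        omega
      obtain ⟨m, w, hw0, hm, hadjw, hcov⟩ :=
        exists_spanning_walk (Fintype.card V) G hconn rfl hn2 u
      have hex : ∀ X : Finset V, X ≠ Finset.univ → ∃ j, w j ∉ X := by
        intro X hX
        obtain ⟨x, hx⟩ : ∃ x, x ∉ X := by
          by_contra hall
          push_neg at hall
          exact hX (Finset.eq_univ_iff_forall.mpr hall)
        obtain ⟨j, _, hj⟩ := hcov x
        exact ⟨j, hj ▸ hx⟩
      set k : Finset V → ℕ := fun X => if h : ∃ j, w j ∉ X then Nat.find h else 0 with hk
      have hkval : ∀ X (hX : X ≠ Finset.univ), k X = Nat.find (hex X hX) := by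
        intro X hX
        rw [hk]
        exact dif_pos (hex X hX)
      have hkspec : ∀ X (hX : X ≠ Finset.univ), w (k X) ∉ X := by
        intro X hX
        rw [hkval X hX]
        exact Nat.find_spec (hex X hX)
      have hkmin : ∀ X (hX : X ≠ Finset.univ) j, j < k X → w j ∈ X := by
        intro X hX j hj
        rw [hkval X hX] at hj
        by_contra hcon
        exact Nat.find_min (hex X hX) hj hcon
      have hkle : ∀ X (hX : X ≠ Finset.univ), k X ≤ m := by
        intro X hX
        obtain ⟨x, hx⟩ : ∃ x, x ∉ X := by
          by_contra hall
          push_neg at hall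
          exact hX (Finset.eq_univ_iff_forall.mpr hall)
        obtain ⟨j, hjm, hj⟩ := hcov x
        rw [hkval X hX]
        exact le_trans (Nat.find_le (hj ▸ hx)) hjm
      set Φ : V → Finset V → ℝ := fun x X =>
        if X = Finset.univ then 0
        else if x = w (k X) then 10 + 9 * ((m - k X : ℕ) : ℝ)
        else 9 * (G.dist x (w (k X)) : ℝ) + 9 * ((m - k X : ℕ) : ℝ) with hΦ
      have hΦnn : ∀ x X, 0 ≤ Φ x X := by
        intro x X
        simp only [hΦ]
        split_ifs <;> positivity
      have hsucc : ∀ X, X ≠ Finset.univ → ∀ x,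
          Φ x (insert x X) ≤ 9 * (G.dist x (w (k X)) : ℝ) + 9 * ((m - k X : ℕ) : ℝ) := by
        intro X hX x
        by_cases hX' : insert x X = Finset.univ
        · simp only [hΦ]
          rw [if_pos hX']
          positivity
        · have hkk : k X ≤ k (insert x X) := by
            rw [hkval X hX, hkval _ hX']
            rw [Nat.le_find_iff]
            intro j hj
            refine fun hcon => hcon (Finset.mem_insert_of_mem (hkmin X hX j ?_))
            rw [hkval X hX]
            exact hj
          have hk'le : k (insert x X) ≤ m := hkle _ hX'
          have hxne : x ≠ w (k (insert x X)) := by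
            intro he
            exact hkspec _ hX' (he ▸ Finset.mem_insert_self x X)
          simp only [hΦ]
          rw [if_neg hX', if_neg hxne]
          have hdd : G.dist (w (k X)) (w (k (insert x X))) ≤ k (insert x X) - k X :=
            walk_dist G hconn w m hadjw _ _ hkk hk'le
          have htri : G.dist x (w (k (insert x X))) ≤
              G.dist x (w (k X)) + G.dist (w (k X)) (w (k (insert x X))) := hconn.dist_triangle
          have hc1 : G.dist x (w (k (insert x X))) ≤
              G.dist x (w (k X)) + (k (insert x X) - k X) := by omega
          have hc1' : (G.dist x (w (k (insert x X))) : ℝ) ≤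
              (G.dist x (w (k X)) : ℝ) + ((k (insert x X) - k X : ℕ) : ℝ) := by
            exact_mod_cast hc1
          have hnat : (m - k X : ℕ) = (k (insert x X) - k X) + (m - k (insert x X)) := by
            omega
          rw [hnat]
          push_cast
          linarith
      have H : ∀ v (X : Finset V), X ≠ Finset.univ → ∃ q : V → ℝ, IsCRWStep G v q ∧
          (∀ y, 0 ≤ q y) ∧ 1 + ∑ y, q y * Φ y (insert y X) ≤ Φ v X := by
        intro v X hX
        by_cases hvτ : v = w (k X)
        · have hb : ∀ y, G.Adj v y → Φ y (insert y X) ≤ 9 + 9 * ((m - k X : ℕ) : ℝ) := by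
            intro y hy
            have h1 := hsucc X hX y
            have h2 : G.dist y (w (k X)) = 1 := by
              rw [← hvτ]
              exact SimpleGraph.dist_eq_one_iff_adj.mpr hy.symm
            rw [h2] at h1
            push_cast at h1
            linarith
          obtain ⟨q, hq1, hq2, hq3⟩ := crw_unif G v (fun y => Φ y (insert y X))
            (9 + 9 * ((m - k X : ℕ) : ℝ)) (by positivity) hb
          refine ⟨q, hq1, hq2, ?_⟩
          have hΦv : Φ v X = 10 + 9 * ((m - k X : ℕ) : ℝ) := by
            simp only [hΦ]
            rw [if_neg hX, if_pos hvτ]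
          rw [hΦv]
          linarith
        · obtain ⟨q, hq1, hq2, hq3⟩ := crw_drift G hconn hdeg hvτ
            (fun y => Φ y (insert y X)) (9 * ((m - k X : ℕ) : ℝ))
            (fun y _ => hsucc X hX y)
          refine ⟨q, hq1, hq2, ?_⟩
          have hΦv : Φ v X = 9 * (G.dist v (w (k X)) : ℝ) + 9 * ((m - k X : ℕ) : ℝ) := by
            simp only [hΦ]
            rw [if_neg hX, if_neg hvτ]
          rw [hΦv]
          exact hq3
      have hne : ({u} : Finset V) ≠ Finset.univ := by
        intro h
        apply hcard1
        rw [← Finset.card_univ, ← h, Finset.card_singleton]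
      have hune : u ≠ w (k {u}) := by
        intro h
        exact hkspec {u} hne (h ▸ Finset.mem_singleton_self u)
      have hkm := hkle {u} hne
      have hΦu : Φ u {u} ≤ 9 * (m : ℝ) := by
        simp only [hΦ]
        rw [if_neg hne, if_neg hune]
        have hd : G.dist u (w (k {u})) ≤ k {u} := by
          have := walk_dist G hconn w m hadjw 0 (k {u}) (Nat.zero_le _) hkm
          rw [hw0] at this
          omega
        have hd' : (G.dist u (w (k {u})) : ℝ) ≤ (k {u} : ℝ) := by exact_mod_cast hd
        have hsub : ((m - k {u} : ℕ) : ℝ) = (m : ℝ) - (k {u} : ℝ) := by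
          rw [Nat.cast_sub hkm]
        rw [hsub]
        linarith
      calc crwCoverTime G u ≤ ENNReal.ofReal (Φ u {u}) := crwCoverTime_le G Φ hΦnn H u
        _ ≤ ENNReal.ofReal (18 * (Fintype.card V : ℝ) - 27) := by
          apply ENNReal.ofReal_le_ofReal
          have hm' : (m : ℝ) + 3 ≤ 2 * (Fintype.card V : ℝ) := by exact_mod_cast hm
          linarith
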